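/- The inverse ψ of the homogeneous normalization map is a reverse-Pentagon map: for all x, y, z in D × D such that every element whose inverse is taken in the evaluation of either side at (x,y,z) is nonzero, ψ₂₃(ψ₁₃(ψ₁₂(x,y,z))) = ψ₁₂(ψ₂₃(x,y,z)). -/
import Mathlib


/-- The map acting as `S` on the first and second factors of `X × X × X`. -/
def map12 {X : Type*} (S : X × X → X × X) : X × X × X → X × X × X :=
  fun p => ((S (p.1, p.2.1)).1, (S (p.1, p.2.1)).2, p.2.2)

/-- The map acting as `S` on the first and third factors of `X × X × X`. -/
def map13 {X : Type*} (S : X × X → X × X) : X × X × X → X × X × X :=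
  fun p => ((S (p.1, p.2.2)).1, p.2.1, (S (p.1, p.2.2)).2)

/-- The map acting as `S` on the second and third factors of `X × X × X`. -/
def map23 {X : Type*} (S : X × X → X × X) : X × X × X → X × X × X :=
  fun p => (p.1, (S (p.2.1, p.2.2)).1, (S (p.2.1, p.2.2)).2)

variable {D : Type*} [DivisionRing D]

/-- The inverse `ψ` of the homogeneous normalization map. -/
def normMapInv : (D × D) × (D × D) → (D × D) × (D × D) :=
  fun ⟨⟨u1, u2⟩, ⟨v1, v2⟩⟩ =>
    ((u1 + u2 * v1, u2 * v2),
     (v1 * (u1 + u2 * v1)⁻¹, v2 - v1 * (u1 + u2 * v1)⁻¹ * (u2 * v2)))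

/-- The (unique) element whose inverse is taken when evaluating `ψ` at `(a, b)`. -/
def invArg (a b : D × D) : D := a.1 + a.2 * b.1

/-- The inverse `ψ` of the homogeneous normalization map is a reverse-Pentagon map:
`ψ₂₃ ∘ ψ₁₃ ∘ ψ₁₂ = ψ₁₂ ∘ ψ₂₃`, wherever all the inverses taken on either side are
inverses of nonzero elements. -/
theorem normMapInv_reversePentagon (x y z : D × D)
    (h1 : invArg x y ≠ 0)
    (h2 : invArg (map12 normMapInv (x, y, z)).1 (map12 normMapInv (x, y, z)).2.2 ≠ 0)
    (h3 : invArg (map13 normMapInv (map12 normMapInv (x, y, z))).2.1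
            (map13 normMapInv (map12 normMapInv (x, y, z))).2.2 ≠ 0)
    (h4 : invArg y z ≠ 0)
    (h5 : invArg (map23 normMapInv (x, y, z)).1 (map23 normMapInv (x, y, z)).2.1 ≠ 0) :
    map23 normMapInv (map13 normMapInv (map12 normMapInv (x, y, z))) =
      map12 normMapInv (map23 normMapInv (x, y, z)) := by
  obtain ⟨x1, x2⟩ := x
  obtain ⟨y1, y2⟩ := y
  obtain ⟨z1, z2⟩ := z
  simp only [map12, map13, map23, normMapInv, invArg, Prod.mk.injEq] at *
  set A := x1 + x2 * y1 with hA
  set B := A + x2 * y2 * z1 with hBdef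
  set E := y1 + y2 * z1 with hE
  have hFB : x1 + x2 * E = B := by rw [hE, hBdef, hA]; noncomm_ring
  rw [hFB] at h5 ⊢
  set a := A⁻¹ with ha
  set b := B⁻¹ with hb
  set e := E⁻¹ with he
  have haA : a * A = 1 := by rw [ha]; exact inv_mul_cancel₀ h1
  have hbB : b * B = 1 := by rw [hb]; exact inv_mul_cancel₀ h2
  have hBb : B * b = 1 := by rw [hb]; exact mul_inv_cancel₀ h2
  have heE : e * E = 1 := by rw [he]; exact inv_mul_cancel₀ h4
  have hbinv : b⁻¹ = B := by rw [hb, inv_inv]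
  have hab : a * (x2 * y2 * z1) * b = a - b := by
    have h' : a * (x2 * y2 * z1) * b = a * (B * b) - a * A * b := by
      rw [hBdef]; noncomm_ring
    rw [h', hBb, haA, mul_one, one_mul]
  have hC : y1 * a + (y2 - y1 * a * (x2 * y2)) * (z1 * b) = E * b := by
    calc y1 * a + (y2 - y1 * a * (x2 * y2)) * (z1 * b)
        = y1 * (a * (B * b)) + (y2 - y1 * a * (x2 * y2)) * (z1 * b) := by
          rw [hBb, mul_one]
      _ = (y1 * (a * B) + (y2 - y1 * a * (x2 * y2)) * z1) * b := by noncomm_ring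
      _ = (y1 * (a * A) + y2 * z1) * b := by
          rw [hBdef]; congr 1; noncomm_ring
      _ = (y1 + y2 * z1) * b := by rw [haA, mul_one]
      _ = E * b := by rw [hE]
  have hQ : (y2 - y1 * a * (x2 * y2)) * (z2 - z1 * b * (x2 * y2 * z2)) =
      y2 * z2 - E * b * (x2 * (y2 * z2)) := by
    calc (y2 - y1 * a * (x2 * y2)) * (z2 - z1 * b * (x2 * y2 * z2))
        = y2 * z2 - y2 * (z1 * (b * (x2 * y2 * z2))) - y1 * (a * (x2 * y2 * z2))
            + y1 * (a * (x2 * y2 * z1) * b * (x2 * y2 * z2)) := by noncomm_ring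
      _ = y2 * z2 - y2 * (z1 * (b * (x2 * y2 * z2))) - y1 * (a * (x2 * y2 * z2))
            + y1 * ((a - b) * (x2 * y2 * z2)) := by rw [hab]
      _ = y2 * z2 - (y1 + y2 * z1) * b * (x2 * (y2 * z2)) := by noncomm_ring
      _ = y2 * z2 - E * b * (x2 * (y2 * z2)) := by rw [hE]
  have hzb : z1 * b * (E * b)⁻¹ = z1 * e := by
    rw [mul_inv_rev, hbinv, ← he]
    calc z1 * b * (B * e) = z1 * ((b * B) * e) := by noncomm_ring
      _ = z1 * e := by rw [hbB, one_mul]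
  refine ⟨⟨?_, ?_⟩, ⟨?_, ?_⟩, ?_, ?_⟩
  · rw [hBdef, hA]
  · rw [mul_assoc]
  · exact hC
  · exact hQ
  · rw [hC, hzb]
  · rw [hC, hQ, hzb]
    calc z2 - z1 * b * (x2 * y2 * z2) - z1 * e * (y2 * z2 - E * b * (x2 * (y2 * z2)))
        = z2 - z1 * e * (y2 * z2) - z1 * (b * (x2 * y2 * z2))
            + z1 * ((e * E) * (b * (x2 * y2 * z2))) := by noncomm_ring
      _ = z2 - z1 * e * (y2 * z2) - z1 * (b * (x2 * y2 * z2))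
            + z1 * (1 * (b * (x2 * y2 * z2))) := by rw [heE]
      _ = z2 - z1 * e * (y2 * z2) := by noncomm_ring
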